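/- Under assumptions A2, A3 and A4, if x is a FOM solution and x̃ ∈ S minimizes the weighted residual objective w ↦ Σ_{i=1}^{n_d} ‖B_i r_i(PΩ_i w, PΓ_i w)‖₂² over S, then for every w ∈ S: max( max_{1≤i≤n_d} ‖PΩ_i(x − x̃)‖₂ , max_{1≤j≤n_p} ‖P̄^j(x − x̃)‖₂ ) ≤ (κu·√(n_d + n_p)/(P·κℓ)) · max( max_{1≤i≤n_d} ‖PΩ_i(x − w)‖₂ , max_{1≤j≤n_p} ‖P̄^j(x − w)‖₂ ). -/

import Mathlib

open Matrix

/-- Euclidean norm of a vector in `ℝ^d`. -/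
noncomputable def enorm' {d : ℕ} (v : Fin d → ℝ) : ℝ :=
  Real.sqrt (∑ j, v j ^ 2)

/-- Maximum of a real-valued family over `Fin k` (for `k > 0`). -/
noncomputable def finMax {k : ℕ} (hk : 0 < k) (f : Fin k → ℝ) : ℝ :=
  Finset.univ.sup' (Finset.univ_nonempty_iff.mpr (Fin.pos_iff_nonempty.mp hk)) f

lemma enorm_nonneg' {d : ℕ} (v : Fin d → ℝ) : 0 ≤ enorm' v := Real.sqrt_nonneg _

lemma enorm_sq' {d : ℕ} (v : Fin d → ℝ) : enorm' v ^ 2 = ∑ j, v j ^ 2 :=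
  Real.sq_sqrt (Finset.sum_nonneg fun _ _ => sq_nonneg _)

lemma enorm_neg' {d : ℕ} (v : Fin d → ℝ) : enorm' (-v) = enorm' v := by
  simp [enorm', neg_sq]

lemma enorm_sub_comm' {d : ℕ} (a b : Fin d → ℝ) : enorm' (a - b) = enorm' (b - a) := by
  rw [← neg_sub, enorm_neg']

lemma sel_mulVec {k n : ℕ} (M : Matrix (Fin k) (Fin n) ℝ) (σ : Fin k → Fin n)
    (hM : ∀ q j, M q j = if j = σ q then 1 else 0) (v : Fin n → ℝ) :
    M.mulVec v = fun q => v (σ q) := by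
  funext q
  simp [Matrix.mulVec, dotProduct, hM, ite_mul]

lemma enorm_sel_le {k n : ℕ} (σ : Fin k → Fin n) (hσ : Function.Injective σ)
    (v : Fin n → ℝ) : enorm' (fun q => v (σ q)) ≤ enorm' v := by
  apply Real.sqrt_le_sqrt
  have himg : (∑ l ∈ Finset.univ.image σ, v l ^ 2) = ∑ q, v (σ q) ^ 2 :=
    Finset.sum_image (fun a _ b _ h => hσ h)
  rw [← himg]
  exact Finset.sum_le_sum_of_subset_of_nonneg (Finset.subset_univ _)
    (fun _ _ _ => sq_nonneg _)

lemma le_finMax {k : ℕ} (hk : 0 < k) (f : Fin k → ℝ) (i : Fin k) : f i ≤ finMax hk f := by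
  unfold finMax
  exact Finset.le_sup' f (Finset.mem_univ i)

/-- a priori error bound w.r.t. the ℓ∞-optimal approximation error over
subdomains and ports: under A2, A3 and A4, if `x` is a FOM solution and `xt ∈ S`
minimizes the weighted residual objective over `S`, then for every `w ∈ S`,
`max(maxᵢ ‖PΩᵢ(x − xt)‖₂, maxⱼ ‖P̄ʲ(x − xt)‖₂)
  ≤ (κu·√(nd+np)/(P·κℓ)) · max(maxᵢ ‖PΩᵢ(x − w)‖₂, maxⱼ ‖P̄ʲ(x − w)‖₂)`. -/
theorem stmt2
    (n nd np : ℕ) (hn : 0 < n) (hnd : 0 < nd) (hnp : 0 < np)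
    (nΩ nΓ nr m : Fin nd → ℕ)
    (r : ∀ i : Fin nd, (Fin (nΩ i) → ℝ) → (Fin (nΓ i) → ℝ) → (Fin (nr i) → ℝ))
    (PΩ : ∀ i : Fin nd, Matrix (Fin (nΩ i)) (Fin n) ℝ)
    (PΓ : ∀ i : Fin nd, Matrix (Fin (nΓ i)) (Fin n) ℝ)
    (B : ∀ i : Fin nd, Matrix (Fin (m i)) (Fin (nr i)) ℝ)
    (σΩ : ∀ i : Fin nd, Fin (nΩ i) → Fin n)
    (hσΩinj : ∀ i, Function.Injective (σΩ i))
    (hPΩrows : ∀ i q j, PΩ i q j = if j = σΩ i q then 1 else 0)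
    (σΓ : ∀ i : Fin nd, Fin (nΓ i) → Fin n)
    (hσΓinj : ∀ i, Function.Injective (σΓ i))
    (hPΓrows : ∀ i q j, PΓ i q j = if j = σΓ i q then 1 else 0)
    -- port extraction matrices
    (nP : Fin np → ℕ)
    (Pbar : ∀ j : Fin np, Matrix (Fin (nP j)) (Fin n) ℝ)
    (σP : ∀ j : Fin np, Fin (nP j) → Fin n)
    (hσPinj : ∀ j, Function.Injective (σP j))
    (hPbarrows : ∀ j q l, Pbar j q l = if l = σP j q then 1 else 0)
    -- row-index sets of `PΩ₁,…,PΩ_nd, P̄¹,…,P̄^np` are pairwise disjoint and cover `{1,…,n}`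
    (hdisjΩΩ : ∀ i i', i ≠ i' → Disjoint (Set.range (σΩ i)) (Set.range (σΩ i')))
    (hdisjPP : ∀ j j', j ≠ j' → Disjoint (Set.range (σP j)) (Set.range (σP j')))
    (hdisjΩP : ∀ i j, Disjoint (Set.range (σΩ i)) (Set.range (σP j)))
    (hcover : ∀ l : Fin n, (∃ i q, σΩ i q = l) ∨ (∃ j q, σP j q = l))
    (S : Set (Fin n → ℝ))
    (κℓ P κu : ℝ) (hκℓ : 0 < κℓ) (hP : 0 < P) (hκu : 0 < κu)
    (hA2 : ∀ w y : Fin n → ℝ,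
      Real.sqrt (∑ i, (enorm' (r i ((PΩ i).mulVec w) ((PΓ i).mulVec w)
          - r i ((PΩ i).mulVec y) ((PΓ i).mulVec y))) ^ 2) ≥ κℓ * enorm' (w - y))
    (hA3 : ∀ w ∈ S,
      Real.sqrt (∑ i, (enorm' ((B i).mulVec (r i ((PΩ i).mulVec w) ((PΓ i).mulVec w)))) ^ 2)
        ≥ P * Real.sqrt (∑ i, (enorm' (r i ((PΩ i).mulVec w) ((PΓ i).mulVec w))) ^ 2))
    (hA4 : ∀ w y : Fin n → ℝ,
      Real.sqrt (∑ i, (enorm' ((B i).mulVec (r i ((PΩ i).mulVec w) ((PΓ i).mulVec w))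
          - (B i).mulVec (r i ((PΩ i).mulVec y) ((PΓ i).mulVec y)))) ^ 2)
        ≤ κu * enorm' (w - y))
    (x : Fin n → ℝ)
    (hx : ∀ i, r i ((PΩ i).mulVec x) ((PΓ i).mulVec x) = 0)
    (xt : Fin n → ℝ) (hxtS : xt ∈ S)
    (hmin : ∀ w ∈ S,
      (∑ i, (enorm' ((B i).mulVec (r i ((PΩ i).mulVec xt) ((PΓ i).mulVec xt)))) ^ 2)
        ≤ ∑ i, (enorm' ((B i).mulVec (r i ((PΩ i).mulVec w) ((PΓ i).mulVec w)))) ^ 2) :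
    ∀ w ∈ S,
      max (finMax hnd fun i => enorm' ((PΩ i).mulVec (x - xt)))
          (finMax hnp fun j => enorm' ((Pbar j).mulVec (x - xt)))
        ≤ (κu * Real.sqrt (nd + np) / (P * κℓ)) *
          max (finMax hnd fun i => enorm' ((PΩ i).mulVec (x - w)))
              (finMax hnp fun j => enorm' ((Pbar j).mulVec (x - w))) := by
  intro w hwS
  -- abbreviations
  set v := x - xt with hv
  set u := x - w with hu
  set Mt := max (finMax hnd fun i => enorm' ((PΩ i).mulVec v))
      (finMax hnp fun j => enorm' ((Pbar j).mulVec v)) with hMtdef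
  set Mw := max (finMax hnd fun i => enorm' ((PΩ i).mulVec u))
      (finMax hnp fun j => enorm' ((Pbar j).mulVec u)) with hMwdef
  -- Mw is nonnegative
  have hMw0 : 0 ≤ Mw := by
    refine le_trans ?_ (le_max_left _ _)
    exact le_trans (enorm_nonneg' _) (le_finMax hnd (fun i => enorm' ((PΩ i).mulVec u)) ⟨0, hnd⟩)
  -- Step 1: Mt ≤ enorm' v
  have hMt : Mt ≤ enorm' v := by
    apply max_le
    · apply Finset.sup'_le
      intro i _
      rw [sel_mulVec (PΩ i) (σΩ i) (hPΩrows i) v]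
      exact enorm_sel_le _ (hσΩinj i) v
    · apply Finset.sup'_le
      intro j _
      rw [sel_mulVec (Pbar j) (σP j) (hPbarrows j) v]
      exact enorm_sel_le _ (hσPinj j) v
  -- Step 2: key scalar chain
  have hxt : κℓ * enorm' v ≤
      Real.sqrt (∑ i, (enorm' (r i ((PΩ i).mulVec xt) ((PΓ i).mulVec xt))) ^ 2) := by
    have h := hA2 x xt
    simp only [hx, zero_sub, enorm_neg'] at h
    exact h
  have hA3t := hA3 xt hxtS
  have hminsqrt :
      Real.sqrt (∑ i, (enorm' ((B i).mulVec (r i ((PΩ i).mulVec xt) ((PΓ i).mulVec xt)))) ^ 2)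
        ≤ Real.sqrt (∑ i, (enorm' ((B i).mulVec (r i ((PΩ i).mulVec w) ((PΓ i).mulVec w)))) ^ 2) :=
    Real.sqrt_le_sqrt (hmin w hwS)
  have hA4' :
      Real.sqrt (∑ i, (enorm' ((B i).mulVec (r i ((PΩ i).mulVec w) ((PΓ i).mulVec w)))) ^ 2)
        ≤ κu * enorm' u := by
    have h := hA4 w x
    simp only [hx, Matrix.mulVec_zero, sub_zero] at h
    rwa [enorm_sub_comm' w x] at h
  have hkey : P * κℓ * enorm' v ≤ κu * enorm' u := by
    calc P * κℓ * enorm' v = P * (κℓ * enorm' v) := by ring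
      _ ≤ P * Real.sqrt (∑ i, (enorm' (r i ((PΩ i).mulVec xt) ((PΓ i).mulVec xt))) ^ 2) :=
          mul_le_mul_of_nonneg_left hxt hP.le
      _ ≤ Real.sqrt (∑ i, (enorm' ((B i).mulVec (r i ((PΩ i).mulVec xt) ((PΓ i).mulVec xt)))) ^ 2) := hA3t
      _ ≤ Real.sqrt (∑ i, (enorm' ((B i).mulVec (r i ((PΩ i).mulVec w) ((PΓ i).mulVec w)))) ^ 2) := hminsqrt
      _ ≤ κu * enorm' u := hA4'
  -- Step 3: enorm' u ≤ sqrt(nd+np) * Mw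
  have hinnerΩ : ∀ i : Fin nd, (∑ q, u (σΩ i q) ^ 2) ≤ Mw ^ 2 := by
    intro i
    have h1 : enorm' ((PΩ i).mulVec u) ≤ Mw := by
      refine le_trans ?_ (le_max_left _ _)
      exact le_finMax hnd (fun i => enorm' ((PΩ i).mulVec u)) i
    have h2 : (∑ q, u (σΩ i q) ^ 2) = enorm' ((PΩ i).mulVec u) ^ 2 := by
      rw [sel_mulVec (PΩ i) (σΩ i) (hPΩrows i) u, enorm_sq']
    rw [h2]
    exact pow_le_pow_left₀ (enorm_nonneg' _) h1 2
  have hinnerP : ∀ j : Fin np, (∑ q, u (σP j q) ^ 2) ≤ Mw ^ 2 := by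
    intro j
    have h1 : enorm' ((Pbar j).mulVec u) ≤ Mw := by
      refine le_trans ?_ (le_max_right _ _)
      exact le_finMax hnp (fun j => enorm' ((Pbar j).mulVec u)) j
    have h2 : (∑ q, u (σP j q) ^ 2) = enorm' ((Pbar j).mulVec u) ^ 2 := by
      rw [sel_mulVec (Pbar j) (σP j) (hPbarrows j) u, enorm_sq']
    rw [h2]
    exact pow_le_pow_left₀ (enorm_nonneg' _) h1 2
  have hsum : (∑ l, u l ^ 2) ≤ ((nd : ℝ) + np) * Mw ^ 2 := by
    classical
    set AΩ : Finset (Fin n) := Finset.univ.biUnion (fun i => Finset.univ.image (σΩ i)) with hAΩ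
    set AP : Finset (Fin n) := Finset.univ.biUnion (fun j => Finset.univ.image (σP j)) with hAP
    have memAΩ : ∀ a, a ∈ AΩ ↔ ∃ i q, σΩ i q = a := by
      intro a; simp [hAΩ, Finset.mem_biUnion, Finset.mem_image, eq_comm]
    have memAP : ∀ a, a ∈ AP ↔ ∃ j q, σP j q = a := by
      intro a; simp [hAP, Finset.mem_biUnion, Finset.mem_image, eq_comm]
    have hdisj : Disjoint AΩ AP := by
      rw [Finset.disjoint_left]
      intro a ha hb
      obtain ⟨i, q, hq⟩ := (memAΩ a).mp ha
      obtain ⟨j, p, hp⟩ := (memAP a).mp hb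
      exact Set.disjoint_left.mp (hdisjΩP i j) ⟨q, hq⟩ ⟨p, hp⟩
    have hunion : (Finset.univ : Finset (Fin n)) ⊆ AΩ ∪ AP := by
      intro l _
      rcases hcover l with ⟨i, q, h⟩ | ⟨j, q, h⟩
      · exact Finset.mem_union_left _ ((memAΩ l).mpr ⟨i, q, h⟩)
      · exact Finset.mem_union_right _ ((memAP l).mpr ⟨j, q, h⟩)
    have hpdΩ : (↑(Finset.univ : Finset (Fin nd)) : Set (Fin nd)).PairwiseDisjoint
        (fun i => Finset.univ.image (σΩ i)) := by
      intro i _ i' _ hne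
      refine Finset.disjoint_left.mpr ?_
      intro a ha hb
      simp only [Finset.mem_image, Finset.mem_univ, true_and] at ha hb
      obtain ⟨q, hq⟩ := ha; obtain ⟨p, hp⟩ := hb
      exact Set.disjoint_left.mp (hdisjΩΩ i i' hne) ⟨q, hq⟩ ⟨p, hp⟩
    have hpdP : (↑(Finset.univ : Finset (Fin np)) : Set (Fin np)).PairwiseDisjoint
        (fun j => Finset.univ.image (σP j)) := by
      intro j _ j' _ hne
      refine Finset.disjoint_left.mpr ?_
      intro a ha hb
      simp only [Finset.mem_image, Finset.mem_univ, true_and] at ha hb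
      obtain ⟨q, hq⟩ := ha; obtain ⟨p, hp⟩ := hb
      exact Set.disjoint_left.mp (hdisjPP j j' hne) ⟨q, hq⟩ ⟨p, hp⟩
    calc (∑ l, u l ^ 2) ≤ ∑ l ∈ AΩ ∪ AP, u l ^ 2 :=
          Finset.sum_le_sum_of_subset_of_nonneg hunion (fun _ _ _ => sq_nonneg _)
      _ = (∑ l ∈ AΩ, u l ^ 2) + ∑ l ∈ AP, u l ^ 2 := Finset.sum_union hdisj
      _ = (∑ i : Fin nd, ∑ q, u (σΩ i q) ^ 2) + ∑ j : Fin np, ∑ q, u (σP j q) ^ 2 := by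
          rw [hAΩ, hAP, Finset.sum_biUnion hpdΩ, Finset.sum_biUnion hpdP]
          congr 1 <;>
          · apply Finset.sum_congr rfl
            intro i _
            rw [Finset.sum_image]
            intro a _ b _ h
            first | exact hσΩinj i h | exact hσPinj i h
      _ ≤ (∑ _i : Fin nd, Mw ^ 2) + ∑ _j : Fin np, Mw ^ 2 :=
          add_le_add (Finset.sum_le_sum fun i _ => hinnerΩ i)
            (Finset.sum_le_sum fun j _ => hinnerP j)
      _ = ((nd : ℝ) + np) * Mw ^ 2 := by
          simp [Finset.sum_const, Finset.card_univ]
          ring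
  have hu2 : enorm' u ≤ Real.sqrt ((nd : ℝ) + np) * Mw := by
    have : enorm' u ≤ Real.sqrt (((nd : ℝ) + np) * Mw ^ 2) := Real.sqrt_le_sqrt hsum
    rwa [Real.sqrt_mul (by positivity) _, Real.sqrt_sq hMw0] at this
  -- assemble
  rw [div_mul_eq_mul_div, le_div_iff₀ (mul_pos hP hκℓ)]
  calc Mt * (P * κℓ) ≤ enorm' v * (P * κℓ) :=
        mul_le_mul_of_nonneg_right hMt (mul_pos hP hκℓ).le
    _ = P * κℓ * enorm' v := by ring
    _ ≤ κu * enorm' u := hkey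
    _ ≤ κu * (Real.sqrt ((nd : ℝ) + np) * Mw) := mul_le_mul_of_nonneg_left hu2 hκu.le
    _ = κu * Real.sqrt ((nd : ℝ) + np) * Mw := by ring
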